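/- Let (S, 𝒮, μ) = ⨂_{j=1}^n (S_j, 𝒮_j, μ_j) with canonical filtration (F_k), and let (φ_k : 1 ≤ k ≤ n) be nonnegative functions with φ_k measurable with respect to F_k (i.e. φ_k depends only on x_1,…,x_k). Then ∫_S (∑_{k=1}^n φ_k(x_1,…,x_k))^{1/2} μ(dx) ≤ C ∫_S (∑_{k=1}^n ∫_{S_k} φ_k(x_1,…,x_{k−1},t) μ_k(dt))^{1/2} μ(dx) for an absolute constant C. -/

import Mathlib

open MeasureTheory ENNReal NNReal

namespace Decouple

noncomputable def B (i : ℤ) : ℝ≥0∞ := (2:ℝ≥0∞) ^ i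
noncomputable def A (i : ℤ) : ℝ≥0∞ := (4:ℝ≥0∞) ^ i

lemma B_ne_zero (i : ℤ) : B i ≠ 0 :=
  (ENNReal.zpow_pos (by norm_num) (by norm_num) i).ne'
lemma B_ne_top (i : ℤ) : B i ≠ ⊤ :=
  (ENNReal.zpow_lt_top (by norm_num) (by norm_num) i).ne
lemma A_ne_zero (i : ℤ) : A i ≠ 0 :=
  (ENNReal.zpow_pos (by norm_num) (by norm_num) i).ne'
lemma A_ne_top (i : ℤ) : A i ≠ ⊤ :=
  (ENNReal.zpow_lt_top (by norm_num) (by norm_num) i).ne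

lemma A_eq (i : ℤ) : A i = B i * B i := by
  have h2 : ((2:ℝ≥0):ℝ≥0∞) = (2:ℝ≥0∞) := by norm_num
  have h4 : ((4:ℝ≥0):ℝ≥0∞) = (4:ℝ≥0∞) := by norm_num
  simp only [A, B, ← h2, ← h4, ← ENNReal.coe_zpow (show (2:ℝ≥0) ≠ 0 by norm_num),
    ← ENNReal.coe_zpow (show (4:ℝ≥0) ≠ 0 by norm_num), ← ENNReal.coe_mul, ← mul_zpow]
  norm_num

lemma B_mul_inv (i : ℤ) : B i * B (-i) = 1 := by
  simp only [B, ENNReal.zpow_neg (2:ℝ≥0∞)]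
  exact ENNReal.mul_inv_cancel (B_ne_zero i) (B_ne_top i)

lemma B_add (i j : ℤ) : B (i + j) = B i * B j :=
  ENNReal.zpow_add (by norm_num) (by norm_num) i j

lemma sq_rpow_half (x : ℝ≥0∞) : (x * x) ^ (1/2 : ℝ) = x := by
  rw [← ENNReal.rpow_one x, ← ENNReal.rpow_add_of_nonneg _ _ (by norm_num) (by norm_num),
    ← ENNReal.rpow_mul]
  norm_num

lemma rpow_half_le (x : ℝ≥0∞) {i : ℤ} (h : x ≤ A i) : x ^ (1/2:ℝ) ≤ B i := by
  rw [← sq_rpow_half (B i), ← A_eq]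
  exact ENNReal.rpow_le_rpow h (by norm_num)

lemma le_rpow_half (x : ℝ≥0∞) {i : ℤ} (h : A i ≤ x) : B i ≤ x ^ (1/2:ℝ) := by
  rw [← sq_rpow_half (B i), ← A_eq]
  exact ENNReal.rpow_le_rpow h (by norm_num)

/-- the dyadic functional -/
noncomputable def D (u : ℝ≥0∞) : ℝ≥0∞ := ∑' i : ℤ, B (-i) * (u ⊓ A i)

lemma exists_log {u : ℝ≥0∞} (h0 : u ≠ 0) (ht : u ≠ ⊤) : ∃ j : ℤ, A j ≤ u ∧ u < A (j+1) := by
  lift u to ℝ≥0 using ht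
  have hu : 0 < u := pos_iff_ne_zero.mpr (by simpa using h0)
  refine ⟨Int.log 4 u, ?_, ?_⟩
  · have := Int.zpow_log_le_self (b := 4) (R := ℝ≥0) (by norm_num) hu
    rw [A, show (4:ℝ≥0∞) = ((4:ℝ≥0):ℝ≥0∞) by norm_num, ← ENNReal.coe_zpow (by norm_num)]
    exact_mod_cast this
  · have := Int.lt_zpow_succ_log_self (b := 4) (r := u) (by norm_num)
    rw [A, show (4:ℝ≥0∞) = ((4:ℝ≥0):ℝ≥0∞) by norm_num, ← ENNReal.coe_zpow (by norm_num)]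
    exact_mod_cast this


lemma tsum_B_neg_nat : ∑' n : ℕ, B (-(n:ℤ)) = 2 := by
  have : ∀ n : ℕ, B (-(n:ℤ)) = (2⁻¹ : ℝ≥0∞) ^ n := by
    intro n
    rw [B, ENNReal.zpow_neg, zpow_natCast, ← ENNReal.inv_pow]
  simp only [this, ENNReal.tsum_geometric, ENNReal.one_sub_inv_two]
  simp

lemma rpow_half_mul_self {u : ℝ≥0∞} (h0 : u ≠ 0) (ht : u ≠ ⊤) :
    u ^ (1/2:ℝ) * u ^ (1/2:ℝ) = u := by
  rw [← ENNReal.rpow_add _ _ h0 ht]; norm_num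

/-- Lower bound: `√u ≤ 2 * D u`. -/
lemma sqrt_le_D (u : ℝ≥0∞) : u ^ (1/2:ℝ) ≤ 2 * D u := by
  rcases eq_or_ne u 0 with rfl | h0
  · simp [ENNReal.zero_rpow_of_pos (by norm_num : (0:ℝ) < 1/2)]
  rcases eq_or_ne u ⊤ with rfl | ht
  · have hD : D ⊤ = ⊤ := by
      refine eq_top_iff.2 ?_
      have h1 : ∑' n : ℕ, B (n:ℤ) ≤ D ⊤ :=
        ENNReal.tsum_comp_le_tsum_of_injective Nat.cast_injective
          (fun i => B (-i) * (⊤ ⊓ A i)) |>.trans_eq' (by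
            refine tsum_congr fun n => ?_
            rw [top_inf_eq, A_eq, ← mul_assoc, mul_comm (B (-(n:ℤ))), B_mul_inv, one_mul])
      refine le_trans ?_ h1
      have : ∀ n : ℕ, B (n:ℤ) = (2:ℝ≥0∞) ^ n := fun n => by rw [B, zpow_natCast]
      simp only [this, ENNReal.tsum_geometric]
      simp [tsub_eq_zero_of_le one_le_two]
    rw [hD]; simp
  obtain ⟨j, hj1, hj2⟩ := exists_log h0 ht
  have key : B j ≤ D u := by
    have : B (-j) * (u ⊓ A j) = B j := by
      rw [inf_eq_right.2 hj1, A_eq, ← mul_assoc, mul_comm (B (-j)), B_mul_inv, one_mul]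
    calc B j = B (-j) * (u ⊓ A j) := this.symm
    _ ≤ D u := ENNReal.le_tsum _
  have : u ^ (1/2:ℝ) ≤ B (j+1) := rpow_half_le u hj2.le
  calc u ^ (1/2:ℝ) ≤ B (j+1) := this
  _ = 2 * B j := by rw [add_comm, B_add]; simp [B]
  _ ≤ 2 * D u := by gcongr


/-- Upper bound: `D u ≤ 4 * √u`. -/
lemma D_le_sqrt (u : ℝ≥0∞) : D u ≤ 4 * u ^ (1/2:ℝ) := by
  rcases eq_or_ne u 0 with rfl | h0
  · simp [D]
  rcases eq_or_ne u ⊤ with rfl | ht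
  · rw [ENNReal.top_rpow_of_pos (by norm_num)]
    simp
  obtain ⟨j, hj1, hj2⟩ := exists_log h0 ht
  have hBj : B j ≤ u ^ (1/2:ℝ) := le_rpow_half u hj1
  have hBj1 : u ^ (1/2:ℝ) ≤ B (j+1) := rpow_half_le u hj2.le
  set f : ℤ → ℝ≥0∞ := fun i => B (-i) * (u ⊓ A i) with hf
  have hshift : D u = ∑' m : ℤ, f (m + (j+1)) := ((Equiv.addRight (j+1)).tsum_eq f).symm
  have hsplit : ∑' m : ℤ, f (m + (j+1))
      = (∑' n : ℕ, f ((n:ℤ) + (j+1))) + ∑' n : ℕ, f (-((n:ℤ)+1) + (j+1)) :=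
    tsum_of_nat_of_neg_add_one ENNReal.summable ENNReal.summable
  have hpos : ∑' n : ℕ, f ((n:ℤ) + (j+1)) ≤ 2 * u ^ (1/2:ℝ) := by
    have hterm : ∀ n : ℕ, f ((n:ℤ) + (j+1)) ≤ B (-(n:ℤ)) * u ^ (1/2:ℝ) := by
      intro n
      have h1 : f ((n:ℤ) + (j+1)) ≤ B (-((n:ℤ) + (j+1))) * u := by
        rw [hf]; exact mul_le_mul_right inf_le_left _
      have h2 : B (-((n:ℤ) + (j+1))) * u ≤ B (-(n:ℤ)) * u ^ (1/2:ℝ) := by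
        rw [neg_add, B_add, mul_assoc]
        refine mul_le_mul_right ?_ _
        have h3 : u ≤ B (j+1) * u ^ (1/2:ℝ) := by
          conv_lhs => rw [← rpow_half_mul_self h0 ht]
          exact mul_le_mul_left hBj1 _
        calc B (-(j+1)) * u ≤ B (-(j+1)) * (B (j+1) * u ^ (1/2:ℝ)) :=
              mul_le_mul_right h3 _
        _ = u ^ (1/2:ℝ) := by rw [← mul_assoc, mul_comm (B (-(j+1))), B_mul_inv, one_mul]
      exact h1.trans h2
    calc ∑' n : ℕ, f ((n:ℤ) + (j+1)) ≤ ∑' n : ℕ, B (-(n:ℤ)) * u ^ (1/2:ℝ) :=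
          ENNReal.tsum_le_tsum hterm
    _ = (∑' n : ℕ, B (-(n:ℤ))) * u ^ (1/2:ℝ) := ENNReal.tsum_mul_right
    _ = 2 * u ^ (1/2:ℝ) := by rw [tsum_B_neg_nat]
  have hneg : ∑' n : ℕ, f (-((n:ℤ)+1) + (j+1)) ≤ 2 * u ^ (1/2:ℝ) := by
    have hterm : ∀ n : ℕ, f (-((n:ℤ)+1) + (j+1)) ≤ B (-(n:ℤ)) * u ^ (1/2:ℝ) := by
      intro n
      have hid : -((n:ℤ)+1) + (j+1) = j - n := by ring
      have h1 : f (-((n:ℤ)+1) + (j+1)) ≤ B (j - n) := by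
        rw [hf, hid]
        calc B (-(j - (n:ℤ))) * (u ⊓ A (j - n)) ≤ B (-(j - (n:ℤ))) * A (j - n) :=
              mul_le_mul_right inf_le_right _
        _ = B (j - n) := by rw [A_eq, ← mul_assoc, mul_comm (B (-(j-(n:ℤ)))), B_mul_inv, one_mul]
      have h2 : B (j - (n:ℤ)) ≤ B (-(n:ℤ)) * u ^ (1/2:ℝ) := by
        rw [sub_eq_add_neg, add_comm, B_add]
        exact mul_le_mul_right hBj _
      exact h1.trans h2
    calc ∑' n : ℕ, f (-((n:ℤ)+1) + (j+1)) ≤ ∑' n : ℕ, B (-(n:ℤ)) * u ^ (1/2:ℝ) :=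
          ENNReal.tsum_le_tsum hterm
    _ = (∑' n : ℕ, B (-(n:ℤ))) * u ^ (1/2:ℝ) := ENNReal.tsum_mul_right
    _ = 2 * u ^ (1/2:ℝ) := by rw [tsum_B_neg_nat]
  calc D u = _ := hshift.trans hsplit
  _ ≤ 2 * u ^ (1/2:ℝ) + 2 * u ^ (1/2:ℝ) := add_le_add hpos hneg
  _ = 4 * u ^ (1/2:ℝ) := by ring


section MT

/-- A function measurable w.r.t. a comap σ-algebra is constant on fibers. -/
lemma comap_fiber_constant {α β γ : Type*} [MeasurableSpace β] [MeasurableSpace γ]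
    [MeasurableSingletonClass γ] {f : α → β} {φ : α → γ}
    (hφ : Measurable[MeasurableSpace.comap f inferInstance] φ) {x y : α}
    (h : f x = f y) : φ x = φ y := by
  obtain ⟨A, -, hpre⟩ :=
    MeasurableSpace.measurableSet_comap.mp (hφ (measurableSet_singleton (φ x)))
  have hx : x ∈ f ⁻¹' A := by rw [hpre]; exact rfl
  have hy : y ∈ f ⁻¹' A := by simpa [Set.mem_preimage, h] using hx
  rw [hpre] at hy
  exact (hy : φ y = φ x).symm

variable {n : ℕ} {S : Fin n → Type} [∀ i, MeasurableSpace (S i)]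
  (μ : (i : Fin n) → Measure (S i)) [∀ i, IsProbabilityMeasure (μ i)]

lemma map_update (k : Fin n) :
    Measure.map (fun p : ((i : Fin n) → S i) × S k => Function.update p.1 k p.2)
      ((Measure.pi μ).prod (μ k)) = Measure.pi μ := by
  refine (Measure.pi_eq fun s hs => ?_).symm
  rw [Measure.map_apply measurable_update' (MeasurableSet.univ_pi hs)]
  have hpre : (fun p : ((i : Fin n) → S i) × S k => Function.update p.1 k p.2) ⁻¹'
      (Set.pi Set.univ s)
      = (Set.pi Set.univ (Function.update s k Set.univ)) ×ˢ s k := by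
    ext ⟨x, t⟩
    simp only [Set.mem_preimage, Set.mem_pi, Set.mem_univ, true_implies, Set.mem_prod]
    constructor
    · intro hmem
      refine ⟨fun i => ?_, by simpa using hmem k⟩
      by_cases hik : i = k
      · subst hik; simp
      · have := hmem i
        rw [Function.update_of_ne hik] at this
        rw [Function.update_of_ne hik]
        exact this
    · rintro ⟨h1, h2⟩ i
      by_cases hik : i = k
      · subst hik; simpa using h2
      · have := h1 i
        rw [Function.update_of_ne hik] at this
        rw [Function.update_of_ne hik]
        exact this
  rw [hpre, Measure.prod_prod, Measure.pi_pi]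
  have : ∀ i, μ i (Function.update s k Set.univ i) =
      Function.update (fun i => μ i (s i)) k (μ k Set.univ) i := by
    intro i
    by_cases hik : i = k
    · subst hik; simp
    · rw [Function.update_of_ne hik, Function.update_of_ne hik]
  rw [Finset.prod_congr rfl fun i _ => this i]
  rw [Finset.prod_update_of_mem (Finset.mem_univ k), measure_univ, one_mul]
  rw [← Finset.prod_erase_mul Finset.univ _ (Finset.mem_univ k), Finset.erase_eq]

lemma lintegral_update {h : ((i : Fin n) → S i) → ℝ≥0∞} (hm : Measurable h) (k : Fin n) :
    ∫⁻ x, h x ∂(Measure.pi μ)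
      = ∫⁻ x, ∫⁻ t, h (Function.update x k t) ∂(μ k) ∂(Measure.pi μ) := by
  conv_lhs => rw [← map_update μ k]
  rw [lintegral_map hm measurable_update',
    lintegral_prod (fun p => h (Function.update p.1 k p.2))
      (((hm.comp measurable_update' :
        Measurable fun p : ((i : Fin n) → S i) × S k => h (Function.update p.1 k p.2))).aemeasurable)]

end MT


section Main

variable {n : ℕ} {S : Fin n → Type} [∀ i, MeasurableSpace (S i)]
  {μ : (i : Fin n) → Measure (S i)} [∀ i, IsProbabilityMeasure (μ i)]
  {φ : Fin n → ((i : Fin n) → S i) → ℝ≥0∞}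

/-- abbreviation for hypothesis -/
def Adapted (φ : Fin n → ((i : Fin n) → S i) → ℝ≥0∞) : Prop :=
  ∀ k : Fin n, Measurable[MeasurableSpace.comap
      (fun x => fun i : {i : Fin n // i ≤ k} => x i) inferInstance] (φ k)

lemma phi_measurable (hφ : Adapted φ) (k : Fin n) : Measurable (φ k) := by
  have hF : Measurable (fun x : (i : Fin n) → S i => fun i : {i : Fin n // i ≤ k} => x i) :=
    measurable_pi_lambda _ fun i => measurable_pi_apply i.val
  exact (hφ k).mono (measurable_iff_comap_le.mp hF) le_rfl

lemma phi_update (hφ : Adapted φ) {j k : Fin n} (hjk : j < k) (x : (i : Fin n) → S i) (t : S k) :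
    φ j (Function.update x k t) = φ j x := by
  refine comap_fiber_constant (hφ j) ?_
  funext i
  exact Function.update_of_ne (fun h => absurd (h ▸ i.2) (not_le.mpr hjk)) _ _

/-- the conditional sum `g k x = ∫ φ k (x with k-th coordinate replaced by t) dμ k t` -/
noncomputable def condFn (μ : (i : Fin n) → Measure (S i))
    (φ : Fin n → ((i : Fin n) → S i) → ℝ≥0∞) (k : Fin n) (x : (i : Fin n) → S i) : ℝ≥0∞ :=
  ∫⁻ t, φ k (Function.update x k t) ∂(μ k)

lemma condFn_measurable (hφ : Adapted φ) (k : Fin n) : Measurable (condFn μ φ k) :=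
  Measurable.lintegral_prod_right' ((phi_measurable hφ k).comp measurable_update')

lemma condFn_update (hφ : Adapted φ) {j k : Fin n} (hjk : j ≤ k) (x : (i : Fin n) → S i)
    (t : S k) : condFn μ φ j (Function.update x k t) = condFn μ φ j x := by
  rcases eq_or_lt_of_le hjk with rfl | hlt
  · unfold condFn
    refine lintegral_congr fun s => ?_
    rw [Function.update_idem]
  · unfold condFn
    refine lintegral_congr fun s => ?_
    rw [Function.update_comm (fun h => absurd h hlt.ne') t s x, phi_update hφ hlt]

/-- partial sums of `condFn` -/
noncomputable def G (μ : (i : Fin n) → Measure (S i))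
    (φ : Fin n → ((i : Fin n) → S i) → ℝ≥0∞) (k : Fin n) (x : (i : Fin n) → S i) : ℝ≥0∞ :=
  ∑ j ∈ Finset.Iic k, condFn μ φ j x

lemma G_measurable (hφ : Adapted φ) (k : Fin n) : Measurable (G μ φ k) :=
  Finset.measurable_sum _ fun j _ => condFn_measurable hφ j

lemma G_update (hφ : Adapted φ) (k : Fin n) (x : (i : Fin n) → S i) (t : S k) :
    G μ φ k (Function.update x k t) = G μ φ k x :=
  Finset.sum_congr rfl fun j hj => condFn_update hφ (Finset.mem_Iic.mp hj) x t

lemma sum_ite_le (g : Fin n → ℝ≥0∞) (a : ℝ≥0∞) :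
    ∑ k, (if (∑ j ∈ Finset.Iic k, g j) ≤ a then g k else 0) ≤ a := by
  classical
  rw [Finset.sum_ite, Finset.sum_const_zero, add_zero]
  set s := Finset.univ.filter fun k => (∑ j ∈ Finset.Iic k, g j) ≤ a with hs
  rcases s.eq_empty_or_nonempty with he | hne
  · simp [he]
  · have hm : s.max' hne ∈ s := s.max'_mem hne
    calc ∑ k ∈ s, g k ≤ ∑ j ∈ Finset.Iic (s.max' hne), g j :=
          Finset.sum_le_sum_of_subset fun k hk => Finset.mem_Iic.mpr (s.le_max' k hk)
    _ ≤ a := (Finset.mem_filter.mp hm).2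

/-- conditioning step: replacing `φ k` by `condFn k` on the predictable set `{G k ≤ a}`. -/
lemma conditioning (hφ : Adapted φ) (k : Fin n) (a : ℝ≥0∞) :
    ∫⁻ x, (if G μ φ k x ≤ a then φ k x else 0) ∂(Measure.pi μ)
      = ∫⁻ x, (if G μ φ k x ≤ a then condFn μ φ k x else 0) ∂(Measure.pi μ) := by
  classical
  have hmeas : Measurable fun x => if G μ φ k x ≤ a then φ k x else 0 :=
    Measurable.ite (measurableSet_le (G_measurable hφ k) measurable_const)
      (phi_measurable hφ k) measurable_const
  rw [lintegral_update μ hmeas k]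
  refine lintegral_congr fun x => ?_
  have hGU : ∀ t : S k, G μ φ k (Function.update x k t) = G μ φ k x :=
    fun t => G_update hφ k x t
  by_cases hc : G μ φ k x ≤ a
  · simp only [hGU, hc, if_true]
    rfl
  · simp [hGU, hc]

/-- the per-level inequality `∫ U ⊓ a ≤ 2 ∫ V ⊓ a`. -/
lemma key_level (hφ : Adapted φ) (a : ℝ≥0∞) :
    ∫⁻ x, (∑ k, φ k x) ⊓ a ∂(Measure.pi μ)
      ≤ 2 * ∫⁻ x, (∑ k, condFn μ φ k x) ⊓ a ∂(Measure.pi μ) := by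
  classical
  set V : ((i : Fin n) → S i) → ℝ≥0∞ := fun x => ∑ k, condFn μ φ k x with hV
  have step1 : ∫⁻ x, (∑ k, φ k x) ⊓ a ∂(Measure.pi μ)
      ≤ (∫⁻ x, (if V x ≤ a then ∑ k, φ k x else 0) ∂(Measure.pi μ))
        + ∫⁻ x, (if V x ≤ a then 0 else a) ∂(Measure.pi μ) := by
    have hmeas : Measurable fun x => if V x ≤ a then ∑ k, φ k x else 0 :=
      Measurable.ite (measurableSet_le (Finset.measurable_sum _ fun j _ =>
        condFn_measurable hφ j) measurable_const)
        (Finset.measurable_sum _ fun j _ => phi_measurable hφ j) measurable_const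
    rw [← lintegral_add_left hmeas]
    refine lintegral_mono fun x => ?_
    by_cases hc : V x ≤ a
    · simp [hc, inf_le_left]
    · simp [hc, inf_le_right]
  have step2 : ∫⁻ x, (if V x ≤ a then 0 else a) ∂(Measure.pi μ)
      ≤ ∫⁻ x, V x ⊓ a ∂(Measure.pi μ) := by
    refine lintegral_mono fun x => ?_
    by_cases hc : V x ≤ a
    · simp [hc]
    · simp only [hc, if_false]
      exact le_inf (not_le.mp hc).le le_rfl
  have step3 : ∫⁻ x, (if V x ≤ a then ∑ k, φ k x else 0) ∂(Measure.pi μ)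
      ≤ ∫⁻ x, V x ⊓ a ∂(Measure.pi μ) := by
    have hsum : ∀ x, (if V x ≤ a then ∑ k, φ k x else 0)
        = ∑ k, (if V x ≤ a then φ k x else 0) := by
      intro x; by_cases hc : V x ≤ a <;> simp [hc]
    calc ∫⁻ x, (if V x ≤ a then ∑ k, φ k x else 0) ∂(Measure.pi μ)
        = ∑ k, ∫⁻ x, (if V x ≤ a then φ k x else 0) ∂(Measure.pi μ) := by
          simp only [hsum]
          exact lintegral_finset_sum _ fun k _ =>
            Measurable.ite (measurableSet_le (Finset.measurable_sum _ fun j _ =>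
              condFn_measurable hφ j) measurable_const)
              (phi_measurable hφ k) measurable_const
    _ ≤ ∑ k, ∫⁻ x, (if G μ φ k x ≤ a then φ k x else 0) ∂(Measure.pi μ) := by
          refine Finset.sum_le_sum fun k _ => lintegral_mono fun x => ?_
          by_cases hc : V x ≤ a
          · have hGa : G μ φ k x ≤ a := by
              refine le_trans ?_ hc
              exact Finset.sum_le_sum_of_subset (Finset.subset_univ _)
            simp [hc, hGa]
          · simp [hc]
    _ = ∑ k, ∫⁻ x, (if G μ φ k x ≤ a then condFn μ φ k x else 0) ∂(Measure.pi μ) :=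
          Finset.sum_congr rfl fun k _ => conditioning hφ k a
    _ = ∫⁻ x, ∑ k, (if G μ φ k x ≤ a then condFn μ φ k x else 0) ∂(Measure.pi μ) :=
          (lintegral_finset_sum _ fun k _ =>
            Measurable.ite (measurableSet_le (G_measurable hφ k) measurable_const)
              (condFn_measurable hφ k) measurable_const).symm
    _ ≤ ∫⁻ x, V x ⊓ a ∂(Measure.pi μ) := by
          refine lintegral_mono fun x => le_inf ?_ ?_
          · refine le_trans (Finset.sum_le_sum fun k _ => ?_) le_rfl
            by_cases hc : G μ φ k x ≤ a <;> simp [hc]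
          · exact sum_ite_le _ a
  calc ∫⁻ x, (∑ k, φ k x) ⊓ a ∂(Measure.pi μ) ≤ _ := step1
  _ ≤ (∫⁻ x, V x ⊓ a ∂(Measure.pi μ)) + ∫⁻ x, V x ⊓ a ∂(Measure.pi μ) := add_le_add step3 step2
  _ = 2 * ∫⁻ x, V x ⊓ a ∂(Measure.pi μ) := (two_mul _).symm

lemma lintegral_D {W : ((i : Fin n) → S i) → ℝ≥0∞} (hW : Measurable W) :
    ∫⁻ x, D (W x) ∂(Measure.pi μ) = ∑' i : ℤ, B (-i) * ∫⁻ x, W x ⊓ A i ∂(Measure.pi μ) := by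
  unfold D
  rw [lintegral_tsum (f := fun i x => B (-i) * (W x ⊓ A i)) fun i => (measurable_const.mul (hW.min measurable_const)).aemeasurable]
  exact tsum_congr fun i => lintegral_const_mul _ (hW.min measurable_const)

lemma main_ineq (hφ : Adapted φ) :
    ∫⁻ x, (∑ k, φ k x) ^ (1/2 : ℝ) ∂(Measure.pi μ)
      ≤ 16 * ∫⁻ x, (∑ k, condFn μ φ k x) ^ (1/2 : ℝ) ∂(Measure.pi μ) := by
  classical
  set π := Measure.pi μ with hπ
  set U : ((i : Fin n) → S i) → ℝ≥0∞ := fun x => ∑ k, φ k x with hU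
  set V : ((i : Fin n) → S i) → ℝ≥0∞ := fun x => ∑ k, condFn μ φ k x with hV
  have hUm : Measurable U := Finset.measurable_sum _ fun k _ => phi_measurable hφ k
  have hVm : Measurable V := Finset.measurable_sum _ fun k _ => condFn_measurable hφ k
  have hDU : Measurable fun x => D (U x) :=
    Measurable.ennreal_tsum fun i => measurable_const.mul (hUm.min measurable_const)
  calc ∫⁻ x, U x ^ (1/2:ℝ) ∂π ≤ ∫⁻ x, 2 * D (U x) ∂π :=
        lintegral_mono fun x => sqrt_le_D (U x)
  _ = 2 * ∫⁻ x, D (U x) ∂π := lintegral_const_mul 2 hDU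
  _ = 2 * ∑' i : ℤ, B (-i) * ∫⁻ x, U x ⊓ A i ∂π := by rw [lintegral_D hUm]
  _ ≤ 2 * ∑' i : ℤ, B (-i) * (2 * ∫⁻ x, V x ⊓ A i ∂π) := by
        refine mul_le_mul_right (ENNReal.tsum_le_tsum fun i => mul_le_mul_right ?_ _) 2
        exact key_level hφ (A i)
  _ = 2 * (2 * ∑' i : ℤ, B (-i) * ∫⁻ x, V x ⊓ A i ∂π) := by
        congr 1
        rw [← ENNReal.tsum_mul_left]
        exact tsum_congr fun i => by ring
  _ = 4 * ∫⁻ x, D (V x) ∂π := by rw [lintegral_D hVm, ← mul_assoc]; norm_num; rfl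
  _ ≤ 4 * ∫⁻ x, 4 * V x ^ (1/2:ℝ) ∂π :=
        mul_le_mul_right (lintegral_mono fun x => D_le_sqrt (V x)) 4
  _ = 16 * ∫⁻ x, V x ^ (1/2:ℝ) ∂π := by
        rw [lintegral_const_mul 4 (hVm.pow_const _), ← mul_assoc]
        norm_num

end Main

end Decouple

open Decouple in
/-- Decoupling inequality on a finite product space: for nonnegative `φ_k` adapted to the
canonical filtration, `∫ (∑ φ_k(x₁,…,x_k))^{1/2} ≤ C ∫ (∑ ∫ φ_k(x₁,…,x_{k-1},t) dμ_k(t))^{1/2}`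
with an absolute constant `C`. -/
theorem decoupled_sqrt_inequality :
    ∃ C : ℝ≥0∞, C ≠ ⊤ ∧
      ∀ (n : ℕ) (S : Fin n → Type) [∀ i, MeasurableSpace (S i)]
        (μ : (i : Fin n) → Measure (S i)) [∀ i, IsProbabilityMeasure (μ i)]
        (μprod : Measure ((i : Fin n) → S i)) [IsProbabilityMeasure μprod],
        -- `μprod` is the product of the `μ i`
        (∀ t : (i : Fin n) → Set (S i), (∀ i, MeasurableSet (t i)) →
          μprod (Set.univ.pi t) = ∏ i, μ i (t i)) →
        ∀ φ : Fin n → ((i : Fin n) → S i) → ℝ≥0∞,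
          -- `φ k` is measurable with respect to the canonical filtration at time `k`,
          -- i.e. depends only on the coordinates `x₁, …, x_k`
          (∀ k : Fin n, Measurable[MeasurableSpace.comap
              (fun x => fun i : {i : Fin n // i ≤ k} => x i) inferInstance] (φ k)) →
          ∫⁻ x, (∑ k, φ k x) ^ (1 / 2 : ℝ) ∂μprod
            ≤ C * ∫⁻ x, (∑ k, ∫⁻ t, φ k (Function.update x k t) ∂(μ k)) ^ (1 / 2 : ℝ)
                ∂μprod := by
  refine ⟨16, by norm_num, ?_⟩
  intro n S _ μ _ μprod _ hprod φ hφ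
  have hπ : Measure.pi μ = μprod := Measure.pi_eq hprod
  rw [← hπ]
  exact main_ineq hφ
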